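/- The restriction functor J^* from symmetric sets to simplicial sets is fully faithful on the full subcategory of spiny symmetric sets: if Y and Z are spiny symmetric sets, then every map of simplicial sets F : J^*Y → J^*Z equals J^*G for a unique map of symmetric sets G : Y → Z. -/

import Mathlib

/-- A (skeletal) simplicial set: a contravariant functor on the simplex category,
with `obj n` the set of `n`-simplices and `map α` the action of an
order-preserving map `α : [m] → [n]`. -/
structure SSet' where
  obj : ℕ → Type
  map : ∀ {m n : ℕ}, (Fin (m + 1) →o Fin (n + 1)) → obj n → obj m
  map_id : ∀ (n : ℕ) (x : obj n), map OrderHom.id x = x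
  map_comp : ∀ {k m n : ℕ} (α : Fin (k + 1) →o Fin (m + 1)) (β : Fin (m + 1) →o Fin (n + 1))
      (x : obj n), map (β.comp α) x = map α (map β x)

/-- The order-preserving map `ρ_{ij} : [1] → [n]`, `0 ↦ i`, `1 ↦ j` (for `i ≤ j`). -/
def rho {n : ℕ} (i j : Fin (n + 1)) (h : i ≤ j) : Fin 2 →o Fin (n + 1) where
  toFun := ![i, j]
  monotone' := by
    intro a b hab
    fin_cases a <;> fin_cases b <;> simp_all

/-- The `k`-th edge `ρ_{k,k+1}^*(x)` of an `n`-simplex. -/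
def SSet'.edge (X : SSet') {n : ℕ} (x : X.obj n) (k : Fin n) : X.obj 1 :=
  X.map (rho k.castSucc k.succ (Fin.castSucc_lt_succ (i := k)).le) x

/-- A simplicial set is edgy if each simplex is determined by its string of edges. -/
def SSet'.IsEdgy (X : SSet') : Prop :=
  ∀ n : ℕ, 1 ≤ n → Function.Injective fun (x : X.obj n) (k : Fin n) => X.edge x k

/-- Conjugation of an order-preserving map by the flips `τ`. -/
def conj {m n : ℕ} (α : Fin (m + 1) →o Fin (n + 1)) : Fin (m + 1) →o Fin (n + 1) where
  toFun k := (α k.rev).rev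
  monotone' := by
    intro a b hab
    exact Fin.rev_le_rev.mpr (α.monotone (Fin.rev_le_rev.mpr hab))

/-- An anti-involution on a simplicial set `X`, i.e. a simplicial map
`ν : X^op → X` with `ν^op ∘ ν = id`, described levelwise.  Naturality of
`ν : X^op → X` amounts to `ν (X(τ∘α∘τ) x) = X(α) (ν x)`. -/
structure AntiInvolution (X : SSet') where
  app : ∀ n : ℕ, X.obj n → X.obj n
  naturality : ∀ {m n : ℕ} (α : Fin (m + 1) →o Fin (n + 1)) (x : X.obj n),
    app m (X.map (conj α) x) = X.map α (app n x)
  involutive : ∀ (n : ℕ) (x : X.obj n), app n (app n x) = x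

/-- The constant map `[1] → [n]` at the last vertex, i.e. `s_0 ∘ (d_0)^n`. -/
def lastConst (n : ℕ) : Fin 2 →o Fin (n + 1) := ⟨fun _ => Fin.last n, monotone_const⟩

/-- `LSpec X ν x y` says that `y ∈ X_{2n}` has the edge string
`[f_n† | ⋯ | f_1† | f_1 | ⋯ | f_n]`, where `[f_1 | ⋯ | f_n]` is the edge string of
`x ∈ X_n`, and that the total composite `ρ_{0,2n}^*(y)` is the identity
`s_0(d_0^n x)` on the last vertex of `x`. -/
def LSpec (X : SSet') (ν : AntiInvolution X) {n : ℕ} (x : X.obj n) (y : X.obj (n + n)) : Prop :=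
  (∀ k : Fin (n + n), X.edge y k =
      if h : (k : ℕ) < n then ν.app 1 (X.edge x ⟨n - 1 - (k : ℕ), by omega⟩)
      else X.edge x ⟨(k : ℕ) - n, by have := k.isLt; omega⟩) ∧
  X.map (rho 0 (Fin.last (n + n)) (Fin.zero_le _)) y = X.map (lastConst n) x

/-- A partial groupoid structure on a simplicial set: it is edgy, has an
anti-involution which is the identity on vertices, and has operators
`L : X_n → X_{2n}` with `L[f_1|⋯|f_n] = [f_n†|⋯|f_1†|f_1|⋯|f_n]` whose total
composite is an identity. -/
structure PartialGroupoidStruct (X : SSet') where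
  edgy : X.IsEdgy
  inv : AntiInvolution X
  inv_zero : ∀ x : X.obj 0, inv.app 0 x = x
  L : ∀ {n : ℕ}, X.obj n → X.obj (n + n)
  L_spec : ∀ {n : ℕ}, 1 ≤ n → ∀ x : X.obj n, LSpec X inv x (L x)

/-- The Prop-valued version: `X` together with the anti-involution `ν` is a
partial groupoid. -/
def IsPartialGroupoid (X : SSet') (ν : AntiInvolution X) : Prop :=
  X.IsEdgy ∧ (∀ v : X.obj 0, ν.app 0 v = v) ∧
    ∀ n : ℕ, 1 ≤ n → ∀ x : X.obj n, ∃ y : X.obj (n + n), LSpec X ν x y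

/-- The matrix form of an `n`-simplex: `x_{ij} = ρ_{ij}^*(x)` for `i ≤ j`, and
`x_{ji} = (x_{ij})†`. -/
def matrixForm (X : SSet') (ν : AntiInvolution X) {n : ℕ} (x : X.obj n) (i j : Fin (n + 1)) :
    X.obj 1 :=
  if h : i ≤ j then X.map (rho i j h) x
  else ν.app 1 (X.map (rho j i (le_of_not_ge h)) x)

/-- The fold map `χ_n : [2n] → [n]`, `i ↦ |n - i|`. -/
def chi (n : ℕ) (i : Fin (n + n + 1)) : Fin (n + 1) :=
  ⟨max n (i : ℕ) - min n (i : ℕ), by have := i.isLt; omega⟩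

/-- A map of simplicial sets. -/
structure SSetHom (X Y : SSet') where
  app : ∀ n : ℕ, X.obj n → Y.obj n
  naturality : ∀ {m n : ℕ} (α : Fin (m + 1) →o Fin (n + 1)) (x : X.obj n),
    app m (X.map α x) = Y.map α (app n x)
/-- A symmetric (simplicial) set: a contravariant functor on the category `Υ`
of the sets `[n]` and arbitrary functions. -/
structure SymSet where
  obj : ℕ → Type
  map : ∀ {m n : ℕ}, (Fin (m + 1) → Fin (n + 1)) → obj n → obj m
  map_id : ∀ (n : ℕ) (x : obj n), map id x = x
  map_comp : ∀ {k m n : ℕ} (φ : Fin (k + 1) → Fin (m + 1)) (ψ : Fin (m + 1) → Fin (n + 1))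
      (x : obj n), map (ψ ∘ φ) x = map φ (map ψ x)

/-- Restriction `J^*` of a symmetric set along the inclusion `J : Δ → Υ`. -/
def SymSet.restrict (Z : SymSet) : SSet' where
  obj := Z.obj
  map α x := Z.map (⇑α) x
  map_id n x := Z.map_id n x
  map_comp α β x := Z.map_comp (⇑α) (⇑β) x

/-- A map of symmetric sets. -/
structure SymSetHom (Y Z : SymSet) where
  app : ∀ n : ℕ, Y.obj n → Z.obj n
  naturality : ∀ {m n : ℕ} (φ : Fin (m + 1) → Fin (n + 1)) (x : Y.obj n),
    app m (Y.map φ x) = Z.map φ (app n x)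

/-- The identity map of symmetric sets. -/
def SymSetHom.id (X : SymSet) : SymSetHom X X where
  app _ x := x
  naturality _ _ := rfl

/-- Composition of maps of symmetric sets. -/
def SymSetHom.comp {X Y Z : SymSet} (G : SymSetHom Y Z) (F : SymSetHom X Y) : SymSetHom X Z where
  app n x := G.app n (F.app n x)
  naturality φ x := by rw [F.naturality, G.naturality]

/-- Restriction `J^*` of a map of symmetric sets. -/
def SymSetHom.restrict {Y Z : SymSet} (G : SymSetHom Y Z) : SSetHom Y.restrict Z.restrict where
  app := G.app
  naturality α x := G.naturality (⇑α) x

/-- A simplicial map between restrictions of symmetric sets commutes with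
the action of any monotone function. -/
lemma nat' {Y Z : SymSet} (F : SSetHom Y.restrict Z.restrict) {m n : ℕ}
    {f : Fin (m + 1) → Fin (n + 1)} (hf : Monotone f) (x : Y.obj n) :
    F.app m (Y.map f x) = Z.map f (F.app n x) :=
  F.naturality ⟨f, hf⟩ x

lemma monotone_pair {n : ℕ} {a b : Fin (n + 1)} (h : a ≤ b) : Monotone ![a, b] :=
  (rho a b h).monotone'

lemma edge_restrict (X : SymSet) {n : ℕ} (x : X.obj n) (k : Fin n) :
    X.restrict.edge x k = X.map ![k.castSucc, k.succ] x := rfl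

lemma edge_map (X : SymSet) {m n : ℕ} (φ : Fin (m + 1) → Fin (n + 1)) (x : X.obj n)
    (k : Fin m) :
    X.restrict.edge (X.map φ x) k = X.map ![φ k.castSucc, φ k.succ] x := by
  rw [edge_restrict, ← X.map_comp]
  congr 1
  funext i
  fin_cases i <;> rfl

/-- The key combinatorial fact: in an edgy symmetric set, if the long edge
`ρ_{02}` of a 2-simplex is the degenerate edge `ρ_{00}`, then
`ρ_{12} = ρ_{10}`. -/
lemma crux (X : SymSet) (hX : X.restrict.IsEdgy) (u : X.obj 2)
    (h : X.map ![0, 2] u = X.map ![0, 0] u) :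
    X.map ![1, 2] u = X.map ![1, 0] u := by
  have h' : X.map ![2, 0] u = X.map ![0, 2] u := by
    have e1 : (![2, 0] : Fin 2 → Fin 3) = ![0, 2] ∘ ![1, 0] := by decide
    have e2 : (![0, 0] : Fin 2 → Fin 3) = ![0, 0] ∘ ![1, 0] := by decide
    rw [e1, X.map_comp, h, ← X.map_comp, ← e2]
  have key : X.map ![1, 0, 2, 0] u = X.map ![1, 0, 0, 2] u := by
    apply hX 3 (by norm_num)
    funext k
    show X.restrict.edge (X.map ![1, 0, 2, 0] u) k = X.restrict.edge (X.map ![1, 0, 0, 2] u) k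
    rw [edge_map, edge_map]
    fin_cases k
    · rfl
    · exact h
    · exact h'
  have := congrArg (X.map ![0, 2]) key
  rw [← X.map_comp, ← X.map_comp] at this
  convert this using 2 <;> decide

/-- A simplicial map between restrictions of edgy symmetric sets commutes
with the flip `τ` on edges. -/
lemma flip_nat {Y Z : SymSet} (hZ : Z.restrict.IsEdgy) (F : SSetHom Y.restrict Z.restrict)
    (e : Y.obj 1) :
    F.app 1 (Y.map ![1, 0] e) = Z.map ![1, 0] (F.app 1 e) := by
  set A : Z.obj 2 := F.app 2 (Y.map ![0, 1, 0] e) with hA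
  have m02 : Monotone (![0, 2] : Fin 2 → Fin 3) := monotone_pair (by decide)
  have m00 : Monotone (![0, 0] : Fin 2 → Fin 3) := monotone_pair (by decide)
  have m12 : Monotone (![1, 2] : Fin 2 → Fin 3) := monotone_pair (by decide)
  have m01 : Monotone (![0, 1] : Fin 2 → Fin 3) := monotone_pair (by decide)
  have h1 : Z.map ![0, 2] A = Z.map ![0, 0] A := by
    rw [hA, ← nat' F m02, ← nat' F m00, ← Y.map_comp, ← Y.map_comp]
    have c : (![0, 1, 0] : Fin 3 → Fin 2) ∘ (![0, 2] : Fin 2 → Fin 3) = ![0, 1, 0] ∘ ![0, 0] := by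
      decide
    rw [c]
  have h2 := crux Z hZ A h1
  -- left side of h2
  have l : Z.map ![1, 2] A = F.app 1 (Y.map ![1, 0] e) := by
    rw [hA, ← nat' F m12, ← Y.map_comp]
    have c : (![0, 1, 0] : Fin 3 → Fin 2) ∘ (![1, 2] : Fin 2 → Fin 3) = ![1, 0] := by decide
    rw [c]
  -- right side of h2
  have r : Z.map ![1, 0] A = Z.map ![1, 0] (F.app 1 e) := by
    have e1 : (![1, 0] : Fin 2 → Fin 3) = ![0, 1] ∘ ![1, 0] := by decide
    rw [e1, Z.map_comp, hA, ← nat' F m01, ← Y.map_comp]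
    have e2 : (![0, 1, 0] : Fin 3 → Fin 2) ∘ (![0, 1] : Fin 2 → Fin 3) = id := by decide
    rw [e2, Y.map_id]
  rw [l, r] at h2
  exact h2

/-- A simplicial map commutes with the action of an arbitrary pair map. -/
lemma nat_pair {Y Z : SymSet} (hZ : Z.restrict.IsEdgy) (F : SSetHom Y.restrict Z.restrict)
    {n : ℕ} (a b : Fin (n + 1)) (x : Y.obj n) :
    F.app 1 (Y.map ![a, b] x) = Z.map ![a, b] (F.app n x) := by
  rcases le_total a b with h | h
  · exact nat' F (monotone_pair h) x
  · have e1 : (![a, b] : Fin 2 → Fin (n + 1)) = ![b, a] ∘ ![1, 0] := by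
      funext i; fin_cases i <;> rfl
    rw [e1, Y.map_comp, flip_nat hZ F, nat' F (monotone_pair h)]
    exact (Z.map_comp _ _ _).symm

/-- The restriction functor `J^*` is fully faithful on spiny
symmetric sets (those whose underlying simplicial set is edgy): every map of
simplicial sets `F : J^*Y → J^*Z` equals `J^*G` for a unique map of symmetric
sets `G : Y → Z`. -/
theorem restrict_fully_faithful (Y Z : SymSet) (hY : Y.restrict.IsEdgy)
    (hZ : Z.restrict.IsEdgy) (F : SSetHom Y.restrict Z.restrict) :
    ∃! G : SymSetHom Y Z, G.restrict = F := by
  have key : ∀ {m n : ℕ} (φ : Fin (m + 1) → Fin (n + 1)) (x : Y.obj n),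
      F.app m (Y.map φ x) = Z.map φ (F.app n x) := by
    intro m n φ x
    rcases Nat.eq_zero_or_pos m with hm | hm
    · subst hm
      exact nat' F (fun a b _ => by rw [Fin.eq_zero a, Fin.eq_zero b]) x
    · apply hZ m hm
      funext k
      show Z.restrict.edge (F.app m (Y.map φ x)) k = Z.restrict.edge (Z.map φ (F.app n x)) k
      have mk : Monotone ![(k.castSucc : Fin (m + 1)), k.succ] :=
        monotone_pair (Fin.castSucc_lt_succ (i := k)).le
      have ec : φ ∘ ![(k.castSucc : Fin (m + 1)), k.succ] = ![φ k.castSucc, φ k.succ] := by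
        funext i; fin_cases i <;> rfl
      show Z.map ![k.castSucc, k.succ] (F.app m (Y.map φ x)) =
        Z.map ![k.castSucc, k.succ] (Z.map φ (F.app n x))
      rw [← nat' F mk, ← Y.map_comp, ec, nat_pair hZ F, ← ec]
      exact Z.map_comp _ _ _
  refine ⟨⟨F.app, fun φ x => key φ x⟩, ?_, ?_⟩
  · cases F; rfl
  · rintro ⟨Gapp, Gnat⟩ hG
    have h : Gapp = F.app := congrArg SSetHom.app hG
    subst h
    rfl
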